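/- arXiv:1009.1851 — 6 statements merged into one kernel-verified Lean document; each statement's English description precedes it below -/
import Mathlib

section
/- For any path-connected space X and n ≥ 2, the Lusternik–Schnirelmann category of X^{n-1} is a lower bound for the n-th topological complexity: cat(X^{n-1}) ≤ TC_n(X). -/
noncomputable section


/-- The space of "multipaths": `n` paths in `X` with a common initial point.  This is the
space `X^{J_n}` of continuous maps from the wedge `J_n` of `n` unit intervals to `X`. -/
abbrev MultiPath (n : ℕ) (X : Type*) [TopologicalSpace X] :=
  {f : Fin n → C(unitInterval, X) // ∀ i j : Fin n, f i 0 = f j 0}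

/-- The endpoint-evaluation fibration `e_n : X^{J_n} → X^n`. -/
def endpointsMap (n : ℕ) (X : Type*) [TopologicalSpace X] :
    C(MultiPath n X, Fin n → X) :=
  ⟨fun f i => f.1 i 1, by
    apply continuous_pi
    intro i
    exact (continuous_eval_const (1 : unitInterval)).comp
      ((continuous_apply i).comp continuous_subtype_val)⟩

/-- The diagonal map `d_n : X → X^n`. -/
def diagMap (n : ℕ) (X : Type*) [TopologicalSpace X] : C(X, Fin n → X) :=
  ⟨fun x _ => x, continuous_pi fun _ => continuous_id⟩

/-- `secatLE p k` : the base of `p` can be covered by `k+1` open sets, each admitting a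
continuous (strict) local section of `p`. -/
def secatLE {E B : Type*} [TopologicalSpace E] [TopologicalSpace B]
    (p : C(E, B)) (k : ℕ) : Prop :=
  ∃ U : Fin (k + 1) → Set B, (∀ i, IsOpen (U i)) ∧ (⋃ i, U i) = Set.univ ∧
    ∀ i, ∃ s : C(U i, E), ∀ x : U i, p (s x) = (x : B)

/-- The (normalized) sectional category / Schwarz genus of a fibration, via strict local
sections. -/
def secat {E B : Type*} [TopologicalSpace E] [TopologicalSpace B] (p : C(E, B)) : ℕ∞ :=
  sInf ((fun k : ℕ => (k : ℕ∞)) '' {k | secatLE p k})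

/-- `genusLE f k` : the target of `f` can be covered by `k+1` open sets, each admitting a
continuous local homotopy section of `f` (this computes the Schwarz genus of an arbitrary
map, i.e. of its fibrational substitute). -/
def genusLE {E B : Type*} [TopologicalSpace E] [TopologicalSpace B]
    (f : C(E, B)) (k : ℕ) : Prop :=
  ∃ U : Fin (k + 1) → Set B, (∀ i, IsOpen (U i)) ∧ (⋃ i, U i) = Set.univ ∧
    ∀ i, ∃ s : C(U i, E), ContinuousMap.Homotopic (f.comp s)
      ⟨fun x : U i => (x : B), continuous_subtype_val⟩

/-- The (normalized) Schwarz genus of an arbitrary continuous map, defined via local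
homotopy sections (equivalently, via a fibrational substitute). -/
def schwarzGenus {E B : Type*} [TopologicalSpace E] [TopologicalSpace B] (f : C(E, B)) : ℕ∞ :=
  sInf ((fun k : ℕ => (k : ℕ∞)) '' {k | genusLE f k})

/-- The `n`-th (normalized) topological complexity: the Schwarz genus of the endpoint
evaluation fibration `e_n : X^{J_n} → X^n`. -/
def TCn (n : ℕ) (X : Type*) [TopologicalSpace X] : ℕ∞ := secat (endpointsMap n X)

/-- `catLE Y k` : `Y` is covered by `k+1` open sets, each contractible in `Y`. -/
def catLE (Y : Type*) [TopologicalSpace Y] (k : ℕ) : Prop :=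
  ∃ U : Fin (k + 1) → Set Y, (∀ i, IsOpen (U i)) ∧ (⋃ i, U i) = Set.univ ∧
    ∀ i, ∃ y : Y, ContinuousMap.Homotopic
      ⟨fun x : U i => (x : Y), continuous_subtype_val⟩ (ContinuousMap.const _ y)

/-- The normalized Lusternik–Schnirelmann category. -/
def LScat (Y : Type*) [TopologicalSpace Y] : ℕ∞ :=
  sInf ((fun k : ℕ => (k : ℕ∞)) '' {k | catLE Y k})

/-- `cat(X^{n-1}) ≤ TC_n(X)` for a path-connected space `X` and `n ≥ 2`. -/
theorem cat_pow_le_TC (n : ℕ) (hn : 2 ≤ n) (X : Type*) [TopologicalSpace X]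
    [PathConnectedSpace X] :
    LScat (Fin (n - 1) → X) ≤ TCn n X := by
  have hX : Nonempty X := PathConnectedSpace.nonempty
  obtain ⟨x0⟩ := hX
  obtain ⟨m, rfl⟩ : ∃ m, n = m + 1 := ⟨n - 1, (Nat.succ_pred_eq_of_pos (by omega)).symm⟩
  refine sInf_le_sInf ?_
  rintro _ ⟨k, hk, rfl⟩
  refine ⟨k, ?_, rfl⟩
  obtain ⟨U, hUo, hUc, hUs⟩ := hk
  show catLE (Fin m → X) k
  -- the embedding `j : X^m → X^{m+1}`, `j x = (x0, x)`
  set jC : C(Fin m → X, Fin (m + 1) → X) :=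
    ⟨fun x => Fin.cases x0 x, by
      apply continuous_pi
      intro i
      refine Fin.cases ?_ ?_ i
      · simpa using continuous_const
      · intro i'
        simpa using continuous_apply i'⟩ with hjC
  refine ⟨fun i => jC ⁻¹' U i, fun i => (hUo i).preimage jC.continuous, ?_, ?_⟩
  · apply Set.eq_univ_of_forall
    intro x
    have : jC x ∈ ⋃ i, U i := hUc ▸ Set.mem_univ _
    obtain ⟨_, ⟨i, rfl⟩, hi⟩ := this
    exact Set.mem_iUnion.2 ⟨i, hi⟩
  · intro i
    obtain ⟨s, hs⟩ := hUs i
    set V : Set (Fin m → X) := jC ⁻¹' U i with hV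
    -- inclusion V → U i
    set ι : C(V, U i) :=
      ⟨fun v => ⟨jC v.1, v.2⟩, Continuous.subtype_mk
        (jC.continuous.comp continuous_subtype_val) _⟩ with hι
    set F : C(V, MultiPath (m + 1) X) := s.comp ι with hF
    have hFcont : ∀ j : Fin (m + 1), Continuous fun v : V => (F v).1 j := fun j =>
      (continuous_apply j).comp (continuous_subtype_val.comp F.continuous)
    have hFend : ∀ (v : V) (j : Fin (m + 1)), (F v).1 j 1 = jC v.1 j := by
      intro v j
      have := hs (ι v)
      have h2 : endpointsMap (m + 1) X (s (ι v)) j = jC v.1 j := congrFun this j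
      exact h2
    -- the intermediate map
    set mid : C(V, Fin m → X) :=
      ⟨fun v i' => (F v).1 i'.succ 0, by
        apply continuous_pi
        intro i'
        exact (continuous_eval_const (0 : unitInterval)).comp
          (hFcont i'.succ)⟩ with hmid
    refine ⟨fun _ => x0, ?_⟩
    have H1 : ContinuousMap.Homotopy
        (⟨fun x : V => (x : Fin m → X), continuous_subtype_val⟩ : C(V, Fin m → X)) mid :=
      { toFun := fun p i' => (F p.2).1 i'.succ (unitInterval.symm p.1)
        continuous_toFun := by
          apply continuous_pi
          intro i'
          exact continuous_eval.comp
            (((hFcont i'.succ).comp continuous_snd).prodMk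
              (unitInterval.continuous_symm.comp continuous_fst))
        map_zero_left := by
          intro v
          funext i'
          have := hFend v i'.succ
          simpa [hjC] using this
        map_one_left := by
          intro v
          funext i'
          simp [hmid] }
    have H2 : ContinuousMap.Homotopy mid (ContinuousMap.const _ (fun _ => x0)) :=
      { toFun := fun p i' => (F p.2).1 0 p.1
        continuous_toFun := by
          apply continuous_pi
          intro i'
          exact continuous_eval.comp
            (((hFcont 0).comp continuous_snd).prodMk continuous_fst)
        map_zero_left := by
          intro v
          funext i'
          have := (F v).2 0 i'.succ
          simpa [hmid] using this
        map_one_left := by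
          intro v
          funext i'
          have := hFend v 0
          simpa [hjC] using this }
    exact ContinuousMap.Homotopic.trans ⟨H1⟩ ⟨H2⟩
end
end

section
/- For any path-connected topological group G and n ≥ 2, TC_n(G) ≤ cat(G^{n-1}). -/
noncomputable section


lemma aux_secat (m k : ℕ) (G : Type*) [TopologicalSpace G] [Group G] [IsTopologicalGroup G]
    [PathConnectedSpace G] (h : catLE (Fin m → G) k) :
    secatLE (endpointsMap (m + 1) G) k := by
  obtain ⟨U, hU, hcov, hsec⟩ := h
  have hφc : Continuous (fun g : Fin (m+1) → G => fun j : Fin m => (g 0)⁻¹ * g j.succ) := by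
    apply continuous_pi
    intro j
    exact ((continuous_apply (0 : Fin (m+1))).inv).mul (continuous_apply j.succ)
  let φ : C(Fin (m+1) → G, Fin m → G) := ⟨_, hφc⟩
  refine ⟨fun i => φ ⁻¹' U i, fun i => (hU i).preimage φ.continuous, ?_, ?_⟩
  · ext g
    simp only [Set.mem_iUnion, Set.mem_univ, iff_true]
    have : φ g ∈ ⋃ i, U i := hcov ▸ Set.mem_univ _
    simpa using this
  · intro i
    obtain ⟨y, hy⟩ := hsec i
    have hy1 : ContinuousMap.Homotopic
        ⟨fun x : U i => (x : Fin m → G), continuous_subtype_val⟩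
        (ContinuousMap.const _ (fun _ => (1:G))) :=
      hy.trans ⟨(Path.pi fun j => PathConnectedSpace.somePath (y j) 1).toHomotopyConst⟩
    obtain ⟨H⟩ := hy1
    set V : Set (Fin (m+1) → G) := φ ⁻¹' U i with hV
    -- A : V → U i
    have hAc : Continuous (fun g : V => (⟨φ g, g.2⟩ : U i)) :=
      (φ.continuous.comp continuous_subtype_val).subtype_mk _
    let A : C(V, U i) := ⟨_, hAc⟩
    -- F : C(V × I, Fin m → G), F (g, t) = H (σ t, A g)
    let F : C(V × unitInterval, Fin m → G) :=
      H.toContinuousMap.comp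
        ⟨fun p => (unitInterval.symm p.2, A p.1),
          (unitInterval.continuous_symm.comp continuous_snd).prodMk
            (A.continuous.comp continuous_fst)⟩
    -- components
    let C0 : C(V × unitInterval, G) := ⟨fun p => (p.1 : Fin (m+1) → G) 0,
      (continuous_apply 0).comp (continuous_subtype_val.comp continuous_fst)⟩
    let Fk : Fin m → C(V × unitInterval, G) := fun j =>
      ⟨fun p => (p.1 : Fin (m+1) → G) 0 * F p j,
        (((continuous_apply (0 : Fin (m+1))).comp
          (continuous_subtype_val.comp continuous_fst)).mul
          ((continuous_apply j).comp F.continuous))⟩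
    let cmp : Fin (m+1) → C(V, C(unitInterval, G)) := fun j =>
      Fin.cases C0.curry (fun j => (Fk j).curry) j
    have hstart : ∀ (g : V) (j : Fin (m+1)), cmp j g 0 = (g : Fin (m+1) → G) 0 := by
      intro g j
      induction j using Fin.cases with
      | zero => rfl
      | succ j =>
        show (g : Fin (m+1) → G) 0 * H (unitInterval.symm 0, A g) j = _
        rw [unitInterval.symm_zero, H.apply_one]
        simp
    refine ⟨⟨fun g => ⟨fun j => cmp j g, fun j j' => by rw [hstart, hstart]⟩, ?_⟩, ?_⟩
    · apply Continuous.subtype_mk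
      apply continuous_pi
      intro j
      induction j using Fin.cases with
      | zero => exact C0.curry.continuous
      | succ j => exact (Fk j).curry.continuous
    · intro g
      funext j
      show cmp j g 1 = (g : Fin (m+1) → G) j
      induction j using Fin.cases with
      | zero => rfl
      | succ j =>
        show (g : Fin (m+1) → G) 0 * H (unitInterval.symm 1, A g) j = _
        rw [unitInterval.symm_one, H.apply_zero]
        show (g : Fin (m+1) → G) 0 * (((g : Fin (m+1) → G) 0)⁻¹ * _) = _
        rw [mul_inv_cancel_left]

/-- For a path-connected topological group `G` and `n ≥ 2`,
`TC_n(G) ≤ cat(G^{n-1})`. -/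
theorem TC_le_cat_pow_of_group (n : ℕ) (hn : 2 ≤ n) (G : Type*) [TopologicalSpace G]
    [Group G] [IsTopologicalGroup G] [PathConnectedSpace G] :
    TCn n G ≤ LScat (Fin (n - 1) → G) := by
  obtain ⟨m, rfl⟩ : ∃ m, n = m + 1 := ⟨n - 1, by omega⟩
  show secat (endpointsMap (m + 1) G) ≤ LScat (Fin m → G)
  unfold secat LScat
  apply sInf_le_sInf
  rintro x ⟨k, hk, rfl⟩
  exact ⟨k, aux_secat m k G hk, rfl⟩
end
end

section
/- For any path-connected topological group G and n ≥ 2, TC_n(G) = cat(G^{n-1}). -/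
noncomputable section


-- index helpers
def idx0 (n : ℕ) (hn : 2 ≤ n) : Fin n := ⟨0, by omega⟩

def idxS {n : ℕ} (hn : 2 ≤ n) (j : Fin (n - 1)) : Fin n := ⟨j.val + 1, by omega⟩

/-- the "affine" inclusion `X^{n-1} → X^n` putting `x0` in slot 0. -/
def aMap {X : Type*} [TopologicalSpace X] (n : ℕ) (hn : 2 ≤ n) (x0 : X) :
    C(Fin (n - 1) → X, Fin n → X) :=
  ⟨fun x i => if h : i.val = 0 then x0 else x ⟨i.val - 1, by omega⟩, by
    apply continuous_pi
    intro i
    by_cases h : i.val = 0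
    · simpa [h] using continuous_const
    · simpa [h] using continuous_apply (A := fun _ : Fin (n-1) => X) (⟨i.val - 1, by omega⟩ : Fin (n - 1))⟩

theorem aMap_idxS {X : Type*} [TopologicalSpace X] {n : ℕ} (hn : 2 ≤ n) (x0 : X)
    (x : Fin (n - 1) → X) (j : Fin (n - 1)) :
    aMap n hn x0 x (idxS hn j) = x j := by
  have h : (idxS hn j).val = j.val + 1 := rfl
  simp only [aMap, ContinuousMap.coe_mk, h]
  rw [dif_neg (by omega)]
  exact congrArg x (Fin.ext (by simp))

theorem aMap_idx0 {X : Type*} [TopologicalSpace X] {n : ℕ} (hn : 2 ≤ n) (x0 : X)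
    (x : Fin (n - 1) → X) : aMap n hn x0 x (idx0 n hn) = x0 := by
  simp [aMap, idx0]

theorem catLE_of_secatLE {X : Type*} [TopologicalSpace X] (x0 : X) {n k : ℕ} (hn : 2 ≤ n)
    (h : secatLE (endpointsMap n X) k) : catLE (Fin (n - 1) → X) k := by
  obtain ⟨U, hUo, hUc, hUs⟩ := h
  refine ⟨fun i => aMap n hn x0 ⁻¹' U i, fun i => (hUo i).preimage (aMap n hn x0).continuous,
    ?_, ?_⟩
  · apply Set.eq_univ_of_forall
    intro x
    have : aMap n hn x0 x ∈ ⋃ i, U i := hUc ▸ Set.mem_univ _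
    obtain ⟨i, hi⟩ := Set.mem_iUnion.mp this
    exact Set.mem_iUnion.mpr ⟨i, hi⟩
  · intro i
    obtain ⟨s, hs⟩ := hUs i
    set V : Set (Fin (n - 1) → X) := aMap n hn x0 ⁻¹' U i with hV
    -- restriction map
    have hr : Continuous fun x : V => (⟨aMap n hn x0 x.1, x.2⟩ : U i) :=
      Continuous.subtype_mk ((aMap n hn x0).continuous.comp continuous_subtype_val) _
    let E : C(V, MultiPath n X) := s.comp ⟨_, hr⟩
    refine ⟨fun _ => x0, ?_⟩
    -- middle map
    have hEc : ∀ j : Fin n, Continuous fun x : V => (E x).1 j :=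
      fun j => (continuous_apply j).comp (continuous_subtype_val.comp E.continuous)
    let mid : C(V, Fin (n - 1) → X) :=
      ⟨fun x _ => (E x).1 (idx0 n hn) 0, by
        apply continuous_pi
        intro j
        exact (continuous_eval_const (0 : unitInterval)).comp (hEc _)⟩
    have H1 : ContinuousMap.Homotopy
        (⟨fun x : V => (x : Fin (n - 1) → X), continuous_subtype_val⟩ : C(V, Fin (n-1) → X))
        mid := by
      refine ⟨⟨fun p => fun j => (E p.2).1 (idxS hn j) (unitInterval.symm p.1), ?_⟩, ?_, ?_⟩
      · apply continuous_pi
        intro j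
        exact continuous_eval.comp
          (((hEc (idxS hn j)).comp continuous_snd).prodMk
            (unitInterval.continuous_symm.comp continuous_fst))
      · intro x
        funext j
        have := congrFun (hs (⟨aMap n hn x0 x.1, x.2⟩ : U i)) (idxS hn j)
        simp only [endpointsMap, ContinuousMap.coe_mk] at this
        show (E x).1 (idxS hn j) (unitInterval.symm 0) = x.1 j
        rw [unitInterval.symm_zero]
        calc (E x).1 (idxS hn j) 1 = aMap n hn x0 x.1 (idxS hn j) := this
          _ = x.1 j := aMap_idxS hn x0 x.1 j
      · intro x
        funext j
        show (E x).1 (idxS hn j) (unitInterval.symm 1) = (E x).1 (idx0 n hn) 0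
        rw [unitInterval.symm_one]
        exact (E x).2 (idxS hn j) (idx0 n hn)
    have H2 : ContinuousMap.Homotopy mid
        (ContinuousMap.const V (fun _ => x0 : Fin (n - 1) → X)) := by
      refine ⟨⟨fun p => fun _ => (E p.2).1 (idx0 n hn) p.1, ?_⟩, ?_, ?_⟩
      · apply continuous_pi
        intro j
        exact continuous_eval.comp
          (((hEc (idx0 n hn)).comp continuous_snd).prodMk continuous_fst)
      · intro x; rfl
      · intro x
        funext j
        show (E x).1 (idx0 n hn) 1 = x0
        have := congrFun (hs (⟨aMap n hn x0 x.1, x.2⟩ : U i)) (idx0 n hn)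
        simp only [endpointsMap, ContinuousMap.coe_mk] at this
        calc (E x).1 (idx0 n hn) 1 = aMap n hn x0 x.1 (idx0 n hn) := this
          _ = x0 := aMap_idx0 hn x0 x.1
    exact ⟨H1.trans H2⟩

def qMap (n : ℕ) (hn : 2 ≤ n) (G : Type*) [TopologicalSpace G] [Group G]
    [IsTopologicalGroup G] : C(Fin n → G, Fin (n - 1) → G) :=
  ⟨fun g j => g (idxS hn j) * (g (idx0 n hn))⁻¹, by
    apply continuous_pi
    intro j
    exact (continuous_apply _).mul ((continuous_apply _).inv)⟩

theorem secatLE_of_catLE {G : Type*} [TopologicalSpace G] [Group G] [IsTopologicalGroup G]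
    [PathConnectedSpace G] {n k : ℕ} (hn : 2 ≤ n)
    (h : catLE (Fin (n - 1) → G) k) : secatLE (endpointsMap n G) k := by
  obtain ⟨V, hVo, hVc, hVs⟩ := h
  refine ⟨fun i => qMap n hn G ⁻¹' V i, fun i => (hVo i).preimage (qMap n hn G).continuous,
    ?_, ?_⟩
  · apply Set.eq_univ_of_forall
    intro g
    have : qMap n hn G g ∈ ⋃ i, V i := hVc ▸ Set.mem_univ _
    obtain ⟨i, hi⟩ := Set.mem_iUnion.mp this
    exact Set.mem_iUnion.mpr ⟨i, hi⟩
  · intro i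
    obtain ⟨c, hc⟩ := hVs i
    obtain ⟨H⟩ := hc
    set U : Set (Fin n → G) := qMap n hn G ⁻¹' V i with hU
    let γ : (j : Fin (n - 1)) → Path (c j) (1 : G) :=
      fun j => PathConnectedSpace.somePath (c j) 1
    have harg : Continuous fun p : U × unitInterval => (2 - 2 * ((p.2 : ℝ)) : ℝ) :=
      continuous_const.sub (continuous_const.mul (continuous_subtype_val.comp continuous_snd))
    have harg' : Continuous fun p : U × unitInterval => (1 - 2 * ((p.2 : ℝ)) : ℝ) :=
      continuous_const.sub (continuous_const.mul (continuous_subtype_val.comp continuous_snd))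
    let F : Fin n → C(U × unitInterval, G) := fun m =>
      if hm : m.val = 0 then
        ⟨fun p => (p.1 : Fin n → G) (idx0 n hn),
          (continuous_apply _).comp (continuous_subtype_val.comp continuous_fst)⟩
      else
        ⟨fun p => (if (p.2 : ℝ) ≤ 1 / 2
            then (γ ⟨m.val - 1, by omega⟩).extend (1 - 2 * (p.2 : ℝ))
            else H (Set.projIcc 0 1 zero_le_one (2 - 2 * (p.2 : ℝ)),
                ⟨qMap n hn G p.1, p.1.2⟩) ⟨m.val - 1, by omega⟩)
            * (p.1 : Fin n → G) (idx0 n hn), by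
          apply Continuous.mul
          · apply Continuous.if_le
            · exact (γ _).continuous_extend.comp harg'
            · refine (continuous_apply _).comp (H.continuous.comp (Continuous.prodMk ?_ ?_))
              · exact continuous_projIcc.comp harg
              · exact Continuous.subtype_mk
                  ((qMap n hn G).continuous.comp (continuous_subtype_val.comp continuous_fst)) _
            · exact continuous_subtype_val.comp continuous_snd
            · exact continuous_const
            · intro p hp
              rw [hp]
              have h1 : (1 - 2 * (1 / 2 : ℝ) : ℝ) = 0 := by norm_num
              have h2 : (2 - 2 * (1 / 2 : ℝ) : ℝ) = 1 := by norm_num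
              rw [h1, h2, Path.extend_zero]
              have : Set.projIcc (0:ℝ) 1 zero_le_one 1 = (1 : unitInterval) :=
                Set.projIcc_right zero_le_one
              rw [this, H.apply_one]
              rfl
          · exact (continuous_apply _).comp (continuous_subtype_val.comp continuous_fst)⟩
    have Fstart : ∀ (m : Fin n) (g : U), F m (g, 0) = (g : Fin n → G) (idx0 n hn) := by
      intro m g
      by_cases hm : m.val = 0
      · simp only [F, dif_pos hm, ContinuousMap.coe_mk]
      · simp only [F, dif_neg hm, ContinuousMap.coe_mk]
        rw [if_pos (by norm_num)]
        have : (1 - 2 * ((0 : unitInterval) : ℝ) : ℝ) = 1 := by norm_num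
        rw [this, Path.extend_one, one_mul]
    have Fend : ∀ (m : Fin n) (g : U), F m (g, 1) = (g : Fin n → G) m := by
      intro m g
      by_cases hm : m.val = 0
      · simp only [F, dif_pos hm, ContinuousMap.coe_mk]
        exact congrArg (g : Fin n → G) (Fin.ext (show (0:ℕ) = m.val by omega))
      · simp only [F, dif_neg hm, ContinuousMap.coe_mk]
        rw [if_neg (by norm_num)]
        have h2 : (2 - 2 * ((1 : unitInterval) : ℝ) : ℝ) = 0 := by norm_num
        rw [h2]
        have : Set.projIcc (0:ℝ) 1 zero_le_one 0 = (0 : unitInterval) :=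
          Set.projIcc_left zero_le_one
        rw [this, H.apply_zero]
        simp only [ContinuousMap.coe_mk, qMap]
        rw [inv_mul_cancel_right]
        exact congrArg (g : Fin n → G) (Fin.ext (show m.val - 1 + 1 = m.val by omega))
    refine ⟨⟨fun g => ⟨fun m => (F m).curry g, fun a b => ?_⟩, ?_⟩, ?_⟩
    · show F a (g, 0) = F b (g, 0)
      rw [Fstart, Fstart]
    · exact Continuous.subtype_mk (continuous_pi fun m => (ContinuousMap.curry (F m)).continuous) _
    · intro g
      funext m
      show F m (g, 1) = (g : Fin n → G) m
      exact Fend m g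

/-- For a path-connected topological group `G` and `n ≥ 2`,
`TC_n(G) = cat(G^{n-1})`. -/
theorem TC_eq_cat_pow_of_group (n : ℕ) (hn : 2 ≤ n) (G : Type*) [TopologicalSpace G]
    [Group G] [IsTopologicalGroup G] [PathConnectedSpace G] :
    TCn n G = LScat (Fin (n - 1) → G) := by
  have hset : {k | secatLE (endpointsMap n G) k} = {k | catLE (Fin (n - 1) → G) k} :=
    Set.ext fun k =>
      ⟨fun h => catLE_of_secatLE (1 : G) hn h, fun h => secatLE_of_catLE hn h⟩
  simp only [TCn, secat, LScat, hset]
end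
end

section
/- Let G be a path-connected topological group all of whose finite cartesian powers are normal topological spaces. Then for every n ≥ 3, TC_n(G) − TC_{n-1}(G) ≤ cat(G). -/
noncomputable section


open Set in
lemma exists_bump {X : Type*} [TopologicalSpace X] [NormalSpace X] {ι : Type*} [Finite ι]
    (U : ι → Set X) (ho : ∀ i, IsOpen (U i)) (hc : ⋃ i, U i = Set.univ) :
    ∃ f : ι → C(X, ℝ), (∀ i x, 0 ≤ f i x) ∧ (∀ i x, f i x ≠ 0 → x ∈ U i) ∧
      ∀ x, ∃ i, f i x = 1 := by
  obtain ⟨v, hvU, hvo, hvc⟩ := exists_subset_iUnion_closure_subset isClosed_univ ho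
    (fun x _ => Set.toFinite _) hc.ge
  choose f hf0 hf1 hf01 using fun i => exists_continuous_zero_one_of_isClosed
    (isClosed_compl_iff.2 (ho i)) isClosed_closure
    (disjoint_compl_left_iff.2 (hvc i))
  refine ⟨f, fun i x => (hf01 i x).1, fun i x hx => ?_, fun x => ?_⟩
  · by_contra h
    exact hx (hf0 i h)
  · obtain ⟨i, hi⟩ := Set.mem_iUnion.1 (hvU (Set.mem_univ x))
    exact ⟨i, hf1 i (subset_closure hi)⟩

lemma restrict_section {E B : Type*} [TopologicalSpace E] [TopologicalSpace B] (p : C(E, B))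
    {S T : Set B} (hST : S ⊆ T) (h : ∃ s : C(T, E), ∀ x : T, p (s x) = (x : B)) :
    ∃ s : C(S, E), ∀ x : S, p (s x) = (x : B) := by
  obtain ⟨s, hsec⟩ := h
  exact ⟨s.comp ⟨Set.inclusion hST, continuous_inclusion hST⟩, fun x => hsec _⟩

lemma glue_sections {E B : Type*} [TopologicalSpace E] [TopologicalSpace B] (p : C(E, B))
    {ι : Type*} (t : ι → Set B)
    (ho : ∀ i, IsOpen (t i)) (hd : Pairwise (Function.onFun Disjoint t))
    (hs : ∀ i, ∃ s : C(t i, E), ∀ x : t i, p (s x) = (x : B)) :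
    ∃ s : C(↥(⋃ i, t i), E), ∀ x : ↥(⋃ i, t i), p (s x) = (x : B) := by
  classical
  rcases Set.eq_empty_or_nonempty (⋃ i, t i) with hne | hne
  · haveI : IsEmpty ↥(⋃ i, t i) := by rw [hne]; exact Set.isEmpty_coe_sort.2 rfl
    exact ⟨⟨isEmptyElim, continuous_iff_continuousAt.2 fun x => isEmptyElim x⟩,
      fun x => isEmptyElim x⟩
  obtain ⟨x0, hx0⟩ := hne
  obtain ⟨i0, hi0⟩ := Set.mem_iUnion.1 hx0
  choose s hsec using hs
  let junk : E := s i0 ⟨x0, hi0⟩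
  let Sg : ι → B → E := fun i x => if h : x ∈ t i then s i ⟨x, h⟩ else junk
  have hSgOn : ∀ i, ContinuousOn (Sg i) (t i) := by
    intro i
    rw [continuousOn_iff_continuous_restrict]
    have : Set.domRestrict (t i) (Sg i) = ⇑(s i) := by
      funext x
      simp only [Set.domRestrict_apply, Sg, dif_pos x.2]
    rw [this]
    exact (s i).continuous
  have hmem : ∀ x : ↥(⋃ i, t i), ∃ i, (x : B) ∈ t i := fun x => Set.mem_iUnion.1 x.2
  choose α hα using hmem
  let S : ↥(⋃ i, t i) → E := fun x => Sg (α x) ↑x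
  have key : ∀ (x : ↥(⋃ i, t i)) (i : ι), (x : B) ∈ t i → S x = Sg i ↑x := by
    intro x i hxi
    have : α x = i := by
      by_contra h
      exact Set.disjoint_left.1 (hd h) (hα x) hxi
    simp [S, this]
  have hScont : Continuous S := by
    rw [continuous_iff_continuousAt]
    intro x
    have h1 : ContinuousAt (Sg (α x)) ↑x :=
      (hSgOn (α x)).continuousAt ((ho (α x)).mem_nhds (hα x))
    have h2 : ContinuousAt (fun z : ↥(⋃ i, t i) => Sg (α x) ↑z) x :=
      h1.comp continuous_subtype_val.continuousAt
    refine h2.congr ?_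
    have hmemnhds : {z : ↥(⋃ i, t i) | (z : B) ∈ t (α x)} ∈ nhds x :=
      ((ho (α x)).preimage continuous_subtype_val).mem_nhds (hα x)
    exact Filter.eventuallyEq_of_mem hmemnhds fun z hz => (key z (α x) hz).symm
  refine ⟨⟨S, hScont⟩, fun x => ?_⟩
  show p (Sg (α x) ↑x) = ↑x
  simp only [Sg, dif_pos (hα x)]
  exact hsec (α x) _


lemma combine_covers {X : Type*} [TopologicalSpace X] [NormalSpace X]
    (P : Set X → Prop)
    (Pmono : ∀ {S T : Set X}, P T → S ⊆ T → P S)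
    (Pglue : ∀ {κ : Type} (t : κ → Set X), (∀ i, IsOpen (t i)) →
      Pairwise (Function.onFun Disjoint t) → (∀ i, P (t i)) → P (⋃ i, t i))
    {a b : ℕ} (A : Fin (b + 1) → Set X) (B : Fin (a + 1) → Set X)
    (hAo : ∀ i, IsOpen (A i)) (hBo : ∀ j, IsOpen (B j))
    (hAc : ⋃ i, A i = Set.univ) (hBc : ⋃ j, B j = Set.univ)
    (hP : ∀ i j, P (A i ∩ B j)) :
    ∃ W : Fin (a + b + 1) → Set X, (∀ k, IsOpen (W k)) ∧ (⋃ k, W k = Set.univ) ∧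
      ∀ k, P (W k) := by
  classical
  obtain ⟨f, hf0, hfU, hf1⟩ := exists_bump A hAo hAc
  obtain ⟨g, hg0, hgU, hg1⟩ := exists_bump B hBo hBc
  set c : Fin (b + 1) → Fin (a + 1) → X → ℝ := fun i j x => f i x * g j x with hc
  set Wst : Finset (Fin (b + 1)) → Finset (Fin (a + 1)) → Set X := fun S T =>
    {x | ∀ i ∈ S, ∀ j ∈ T, 0 < c i j x ∧
      ∀ s t, ¬(s ∈ S ∧ t ∈ T) → c s t x < c i j x} with hWst
  -- openness
  have hWo : ∀ S T, IsOpen (Wst S T) := by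
    intro S T
    have heq : Wst S T = ⋂ (i : Fin (b + 1)) (j : Fin (a + 1)),
        (if i ∈ S ∧ j ∈ T then
          ({x | 0 < c i j x} ∩ ⋂ (s : Fin (b + 1)) (t : Fin (a + 1)),
            (if s ∈ S ∧ t ∈ T then Set.univ else {x | c s t x < c i j x}))
        else Set.univ) := by
      ext x
      simp only [hWst, Set.mem_setOf_eq, Set.mem_iInter]
      constructor
      · intro h i j
        split_ifs with hij
        · refine ⟨(h i hij.1 j hij.2).1, ?_⟩
          refine Set.mem_iInter.2 fun s => Set.mem_iInter.2 fun t => ?_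
          split_ifs with hst
          · trivial
          · exact (h i hij.1 j hij.2).2 s t hst
        · trivial
      · intro h i hi j hj
        have := h i j
        rw [if_pos ⟨hi, hj⟩] at this
        refine ⟨this.1, fun s t hst => ?_⟩
        have h2 := Set.mem_iInter.1 (Set.mem_iInter.1 this.2 s) t
        rwa [if_neg hst] at h2
    rw [heq]
    refine isOpen_iInter_of_finite fun i => isOpen_iInter_of_finite fun j => ?_
    split_ifs
    · refine (isOpen_lt continuous_const ((f i).continuous.mul (g j).continuous)).inter ?_
      refine isOpen_iInter_of_finite fun s => isOpen_iInter_of_finite fun t => ?_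
      split_ifs
      · exact isOpen_univ
      · exact isOpen_lt ((f s).continuous.mul (g t).continuous)
          ((f i).continuous.mul (g j).continuous)
    · exact isOpen_univ
  -- subset property
  have hsub : ∀ S T i j, i ∈ S → j ∈ T → Wst S T ⊆ A i ∩ B j := by
    intro S T i j hi hj x hx
    have h1 := (hx i hi j hj).1
    have hf : f i x ≠ 0 := by
      intro h0
      rw [hc] at h1
      simp only [h0, zero_mul] at h1
      exact lt_irrefl _ h1
    have hg : g j x ≠ 0 := by
      intro h0
      rw [hc] at h1
      simp only [h0, mul_zero] at h1
      exact lt_irrefl _ h1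
    exact ⟨hfU i x hf, hgU j x hg⟩
  -- disjointness
  have hdisj : ∀ S T S' T', S.Nonempty → T.Nonempty → S'.Nonempty → T'.Nonempty →
      S.card + T.card = S'.card + T'.card → ¬(S = S' ∧ T = T') →
      Disjoint (Wst S T) (Wst S' T') := by
    intro S T S' T' hS hT hS' hT' hcard hne
    rw [Set.disjoint_left]
    intro x hx hx'
    -- find (i,j) ∈ S×T with ¬(i ∈ S' ∧ j ∈ T')
    have hnotsub : ¬(S ⊆ S' ∧ T ⊆ T') := by
      rintro ⟨h1, h2⟩
      have c1 := Finset.card_le_card h1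
      have c2 := Finset.card_le_card h2
      have e1 : S.card = S'.card := by omega
      have e2 : T.card = T'.card := by omega
      exact hne ⟨Finset.eq_of_subset_of_card_le h1 e1.ge, Finset.eq_of_subset_of_card_le h2 e2.ge⟩
    have hnotsub' : ¬(S' ⊆ S ∧ T' ⊆ T) := by
      rintro ⟨h1, h2⟩
      have c1 := Finset.card_le_card h1
      have c2 := Finset.card_le_card h2
      have e1 : S.card = S'.card := by omega
      have e2 : T.card = T'.card := by omega
      exact hne ⟨(Finset.eq_of_subset_of_card_le h1 e1.le).symm,
        (Finset.eq_of_subset_of_card_le h2 e2.le).symm⟩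
    have hpair : ∃ i ∈ S, ∃ j ∈ T, ¬(i ∈ S' ∧ j ∈ T') := by
      rw [not_and_or] at hnotsub
      rcases hnotsub with h | h
      · obtain ⟨i, hi, hi'⟩ := Finset.not_subset.1 h
        obtain ⟨j, hj⟩ := hT
        exact ⟨i, hi, j, hj, fun hij => hi' hij.1⟩
      · obtain ⟨j, hj, hj'⟩ := Finset.not_subset.1 h
        obtain ⟨i, hi⟩ := hS
        exact ⟨i, hi, j, hj, fun hij => hj' hij.2⟩
    have hpair' : ∃ i ∈ S', ∃ j ∈ T', ¬(i ∈ S ∧ j ∈ T) := by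
      rw [not_and_or] at hnotsub'
      rcases hnotsub' with h | h
      · obtain ⟨i, hi, hi'⟩ := Finset.not_subset.1 h
        obtain ⟨j, hj⟩ := hT'
        exact ⟨i, hi, j, hj, fun hij => hi' hij.1⟩
      · obtain ⟨j, hj, hj'⟩ := Finset.not_subset.1 h
        obtain ⟨i, hi⟩ := hS'
        exact ⟨i, hi, j, hj, fun hij => hj' hij.2⟩
    obtain ⟨i, hi, j, hj, hout⟩ := hpair
    obtain ⟨i', hi', j', hj', hout'⟩ := hpair'
    have l1 := (hx i hi j hj).2 i' j' hout'
    have l2 := (hx' i' hi' j' hj').2 i j hout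
    linarith
  -- covering
  have hcov : ∀ x, ∃ S T, S.Nonempty ∧ T.Nonempty ∧ x ∈ Wst S T := by
    intro x
    set S : Finset (Fin (b + 1)) := Finset.univ.filter (fun i => ∀ s, f s x ≤ f i x) with hS
    set T : Finset (Fin (a + 1)) := Finset.univ.filter (fun j => ∀ t, g t x ≤ g j x) with hT
    obtain ⟨i0, hi0⟩ := Finite.exists_max (fun i => f i x)
    obtain ⟨j0, hj0⟩ := Finite.exists_max (fun j => g j x)
    have hSne : S.Nonempty := ⟨i0, by simp [hS, hi0]⟩
    have hTne : T.Nonempty := ⟨j0, by simp [hT, hj0]⟩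
    refine ⟨S, T, hSne, hTne, ?_⟩
    intro i hi j hj
    have hfi : ∀ s, f s x ≤ f i x := by
      rw [hS, Finset.mem_filter] at hi; exact hi.2
    have hgj : ∀ t, g t x ≤ g j x := by
      rw [hT, Finset.mem_filter] at hj; exact hj.2
    obtain ⟨i1, hi1⟩ := hf1 x
    obtain ⟨j1, hj1⟩ := hg1 x
    have hfipos : 0 < f i x := lt_of_lt_of_le one_pos (hi1 ▸ hfi i1)
    have hgjpos : 0 < g j x := lt_of_lt_of_le one_pos (hj1 ▸ hgj j1)
    refine ⟨mul_pos hfipos hgjpos, fun s t hst => ?_⟩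
    rw [not_and_or] at hst
    rcases hst with hs | ht
    · have hlt : f s x < f i x := by
        rw [hS, Finset.mem_filter] at hs
        push_neg at hs
        obtain ⟨s', hs'⟩ := hs (Finset.mem_univ s)
        exact lt_of_lt_of_le hs' (hfi s')
      calc f s x * g t x ≤ f s x * g j x := mul_le_mul_of_nonneg_left (hgj t) (hf0 s x)
        _ < f i x * g j x := mul_lt_mul_of_pos_right hlt hgjpos
    · have hlt : g t x < g j x := by
        rw [hT, Finset.mem_filter] at ht
        push_neg at ht
        obtain ⟨t', ht'⟩ := ht (Finset.mem_univ t)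
        exact lt_of_lt_of_le ht' (hgj t')
      calc f s x * g t x ≤ f i x * g t x := mul_le_mul_of_nonneg_right (hfi s) (hg0 t x)
        _ < f i x * g j x := mul_lt_mul_of_pos_left hlt hfipos
  -- assemble
  set idx : Fin (a + b + 1) → Type := fun k =>
    {q : Finset (Fin (b + 1)) × Finset (Fin (a + 1)) //
      q.1.Nonempty ∧ q.2.Nonempty ∧ q.1.card + q.2.card = (k : ℕ) + 2} with hidx
  refine ⟨fun k => ⋃ p : idx k, Wst p.1.1 p.1.2, fun k => isOpen_iUnion fun p => hWo _ _,
    ?_, fun k => ?_⟩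
  · rw [Set.eq_univ_iff_forall]
    intro x
    obtain ⟨S, T, hSne, hTne, hmem⟩ := hcov x
    have hS1 : 1 ≤ S.card := Finset.card_pos.2 hSne
    have hT1 : 1 ≤ T.card := Finset.card_pos.2 hTne
    have hSb : S.card ≤ b + 1 := by simpa using Finset.card_le_univ S
    have hTa : T.card ≤ a + 1 := by simpa using Finset.card_le_univ T
    have hk : S.card + T.card - 2 < a + b + 1 := by omega
    refine Set.mem_iUnion.2 ⟨⟨S.card + T.card - 2, hk⟩, ?_⟩
    refine Set.mem_iUnion.2 ⟨⟨(S, T), hSne, hTne, by simp; omega⟩, hmem⟩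
  · refine Pglue (fun p : idx k => Wst p.1.1 p.1.2) (fun p => hWo _ _) ?_ ?_
    · intro p q hpq
      have hne : ¬(p.1.1 = q.1.1 ∧ p.1.2 = q.1.2) := by
        rintro ⟨h1, h2⟩
        exact hpq (Subtype.ext (Prod.ext h1 h2))
      exact hdisj _ _ _ _ p.2.1 p.2.2.1 q.2.1 q.2.2.1
        (p.2.2.2.trans q.2.2.2.symm) hne
    · intro p
      obtain ⟨i, hi⟩ := p.2.1
      obtain ⟨j, hj⟩ := p.2.2.1
      exact Pmono (hP i j) (hsub _ _ i j hi hj)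


lemma pair_section {G : Type*} [TopologicalSpace G] [Group G] [IsTopologicalGroup G]
    {m : ℕ} {y : G} (γ : Path (1 : G) y)
    {U : Set (Fin m → G)} {V : Set G}
    (s : C(U, MultiPath m G)) (hs : ∀ u : U, endpointsMap m G (s u) = ↑u)
    (K : ContinuousMap.Homotopy (⟨fun x : V => (x : G), continuous_subtype_val⟩ : C(V, G))
      (ContinuousMap.const _ y))
    (lm : Fin m) (D : Set (Fin (m + 1) → G))
    (hD1 : ∀ w ∈ D, (fun k => w (Fin.castSucc k)) ∈ U)
    (hD2 : ∀ w ∈ D, (w (Fin.castSucc lm))⁻¹ * w (Fin.last m) ∈ V) :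
    ∃ σ : C(D, MultiPath (m + 1) G),
      ∀ w : D, endpointsMap (m + 1) G (σ w) = ↑w := by
  classical
  set pr : ℝ → unitInterval := fun r => Set.projIcc 0 1 zero_le_one r with hprdef
  have prCont : Continuous pr := continuous_projIcc
  have pr0 : ∀ r : ℝ, r ≤ 0 → pr r = 0 := fun r hr => by
    simp only [hprdef]; rw [Set.projIcc_of_le_left _ hr]; rfl
  have pr1 : ∀ r : ℝ, 1 ≤ r → pr r = 1 := fun r hr => by
    simp only [hprdef]; rw [Set.projIcc_of_right_le _ hr]; rfl
  -- front map into U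
  have frCont : Continuous fun w : D =>
      (⟨fun k => (w : Fin (m + 1) → G) (Fin.castSucc k), hD1 ↑w w.2⟩ : U) := by
    refine Continuous.subtype_mk ?_ _
    exact continuous_pi fun k => (continuous_apply _).comp continuous_subtype_val
  set sf : D → MultiPath m G :=
    fun w => s ⟨fun k => (w : Fin (m + 1) → G) (Fin.castSucc k), hD1 ↑w w.2⟩ with hsfdef
  have sfCont : Continuous sf := s.continuous.comp frCont
  set base : D → G := fun w => (w : Fin (m + 1) → G) (Fin.castSucc lm) with hbasedef
  have baseCont : Continuous base := (continuous_apply _).comp continuous_subtype_val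
  set vv : D → V := fun w =>
    ⟨(base w)⁻¹ * (w : Fin (m + 1) → G) (Fin.last m), hD2 ↑w w.2⟩ with hvvdef
  have vvCont : Continuous vv := by
    refine Continuous.subtype_mk ?_ _
    exact (baseCont.inv).mul ((continuous_apply _).comp continuous_subtype_val)
  -- endpoints of the section paths
  have sfEnd : ∀ (w : D) (k : Fin m),
      (sf w).1 k 1 = (w : Fin (m + 1) → G) (Fin.castSucc k) := by
    intro w k
    have := congrFun (hs ⟨fun k => (w : Fin (m + 1) → G) (Fin.castSucc k), hD1 ↑w w.2⟩) k
    exact this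
  -- the last path, as a map on D × I
  set Φ : D × unitInterval → G := fun p =>
    if (p.2 : ℝ) ≤ 1 / 2 then (sf p.1).1 lm (pr (2 * (p.2 : ℝ)))
    else if (p.2 : ℝ) ≤ 3 / 4 then base p.1 * γ (pr (4 * (p.2 : ℝ) - 2))
    else base p.1 * K (pr (4 - 4 * (p.2 : ℝ)), vv p.1) with hΦdef
  have hA : Continuous fun p : D × unitInterval => (sf p.1).1 lm (pr (2 * (p.2 : ℝ))) := by
    have h1 : Continuous fun p : D × unitInterval => (sf p.1).1 lm :=
      ((continuous_apply lm).comp (continuous_subtype_val.comp sfCont)).comp continuous_fst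
    have h2 : Continuous fun p : D × unitInterval => pr (2 * (p.2 : ℝ)) :=
      prCont.comp (continuous_const.mul (continuous_subtype_val.comp continuous_snd))
    exact continuous_eval.comp (h1.prodMk h2)
  have hB : Continuous fun p : D × unitInterval => base p.1 * γ (pr (4 * (p.2 : ℝ) - 2)) := by
    refine (baseCont.comp continuous_fst).mul ?_
    exact γ.continuous.comp (prCont.comp
      ((continuous_const.mul (continuous_subtype_val.comp continuous_snd)).sub continuous_const))
  have hC : Continuous fun p : D × unitInterval => base p.1 * K (pr (4 - 4 * (p.2 : ℝ)), vv p.1) := by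
    refine (baseCont.comp continuous_fst).mul ?_
    refine K.continuous.comp (Continuous.prodMk ?_ (vvCont.comp continuous_fst))
    exact prCont.comp (continuous_const.sub
      (continuous_const.mul (continuous_subtype_val.comp continuous_snd)))
  have ΦCont : Continuous Φ := by
    rw [hΦdef]
    refine Continuous.if_le hA ?_ (continuous_subtype_val.comp continuous_snd) continuous_const ?_
    · refine Continuous.if_le hB hC (continuous_subtype_val.comp continuous_snd) continuous_const ?_
      intro p hp
      rw [hp]
      have e1 : pr (4 * (3 / 4 : ℝ) - 2) = 1 := pr1 _ (by norm_num)
      have e2 : pr (4 - 4 * (3 / 4 : ℝ)) = 1 := pr1 _ (by norm_num)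
      rw [e1, e2, γ.target, K.apply_one]
      rfl
    · intro p hp
      rw [hp, if_pos (by norm_num : (1 / 2 : ℝ) ≤ 3 / 4)]
      have e1 : pr (2 * (1 / 2 : ℝ)) = 1 := pr1 _ (by norm_num)
      have e2 : pr (4 * (1 / 2 : ℝ) - 2) = 0 := pr0 _ (by norm_num)
      rw [e1, e2, sfEnd p.1 lm, γ.source, mul_one]
  set lastCM : C(D, C(unitInterval, G)) := ContinuousMap.curry ⟨Φ, ΦCont⟩ with hlastdef
  -- the full family of paths
  set σfun : D → Fin (m + 1) → C(unitInterval, G) := fun w k =>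
    if h : k = Fin.last m then lastCM w else (sf w).1 (k.castPred h) with hσdef
  have hΦ0 : ∀ w : D, lastCM w 0 = (sf w).1 lm 0 := by
    intro w
    have : lastCM w 0 = Φ (w, 0) := ContinuousMap.curry_apply _ _ _
    rw [this, hΦdef]
    have h0 : ((0 : unitInterval) : ℝ) = 0 := rfl
    simp only [h0]
    rw [if_pos (by norm_num : (0 : ℝ) ≤ 1 / 2)]
    rw [show (2 * (0:ℝ)) = 0 by ring, pr0 0 le_rfl]
  have hcommon : ∀ (w : D) (i j : Fin (m + 1)), σfun w i 0 = σfun w j 0 := by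
    have haux : ∀ (w : D) (i : Fin (m + 1)), σfun w i 0 = (sf w).1 lm 0 := by
      intro w i
      simp only [hσdef]
      by_cases h : i = Fin.last m
      · rw [dif_pos h]
        exact hΦ0 w
      · rw [dif_neg h]
        exact (sf w).2 _ lm
    intro w i j
    rw [haux, haux]
  have σCont : Continuous fun w : D => σfun w := by
    refine continuous_pi fun k => ?_
    by_cases h : k = Fin.last m
    · simp only [hσdef, dif_pos h]
      exact lastCM.continuous
    · simp only [hσdef, dif_neg h]
      exact (continuous_apply _).comp (continuous_subtype_val.comp sfCont)
  refine ⟨⟨fun w => ⟨σfun w, hcommon w⟩, σCont.subtype_mk _⟩, ?_⟩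
  intro w
  funext k
  show σfun w k 1 = (w : Fin (m + 1) → G) k
  simp only [hσdef]
  by_cases h : k = Fin.last m
  · rw [dif_pos h]
    have : lastCM w 1 = Φ (w, 1) := ContinuousMap.curry_apply _ _ _
    rw [this, hΦdef]
    have h1 : ((1 : unitInterval) : ℝ) = 1 := rfl
    simp only [h1]
    rw [if_neg (by norm_num : ¬ (1 : ℝ) ≤ 1 / 2), if_neg (by norm_num : ¬ (1 : ℝ) ≤ 3 / 4)]
    rw [show (4 - 4 * (1:ℝ)) = 0 by ring, pr0 0 le_rfl, K.apply_zero]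
    show base w * ((base w)⁻¹ * (w : Fin (m + 1) → G) (Fin.last m)) = _
    rw [mul_inv_cancel_left, h]
  · rw [dif_neg h]
    rw [sfEnd w (k.castPred h), Fin.castSucc_castPred]


lemma enat_coe_sInf_le {S : Set ℕ} (hS : S.Nonempty) :
    ((sInf S : ℕ) : ℕ∞) ≤ sInf ((fun k : ℕ => (k : ℕ∞)) '' S) :=
  le_sInf (by rintro x ⟨k, hk, rfl⟩; exact Nat.cast_le.2 (Nat.sInf_le hk))

/-- For a path-connected topological group `G` all of whose finite cartesian
powers are normal (Hausdorff) spaces, and `n ≥ 3`: `TC_n(G) − TC_{n-1}(G) ≤ cat(G)`. -/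
theorem TC_succ_diff_le_cat_of_group (n : ℕ) (hn : 3 ≤ n) (G : Type*) [TopologicalSpace G]
    [Group G] [IsTopologicalGroup G] [PathConnectedSpace G]
    (hnorm : ∀ k : ℕ, NormalSpace (Fin k → G)) (hT2 : ∀ k : ℕ, T2Space (Fin k → G)) :
    TCn n G - TCn (n - 1) G ≤ LScat G := by
  classical
  obtain ⟨m, hm2, rfl⟩ : ∃ m, 2 ≤ m ∧ n = m + 1 := ⟨n - 1, by omega, by omega⟩
  have hm1 : m + 1 - 1 = m := by omega
  rw [hm1, tsub_le_iff_right]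
  by_cases hL : {k | catLE G k}.Nonempty
  swap
  · have hLt : LScat G = ⊤ := by
      rw [LScat, Set.not_nonempty_iff_eq_empty.1 hL, Set.image_empty, sInf_empty]
    rw [hLt, top_add]
    exact le_top
  by_cases hTC : {k | secatLE (endpointsMap m G) k}.Nonempty
  swap
  · have hTt : TCn m G = ⊤ := by
      rw [TCn, secat, Set.not_nonempty_iff_eq_empty.1 hTC, Set.image_empty, sInf_empty]
    rw [hTt, add_top]
    exact le_top
  set a := sInf {k | catLE G k} with hadef
  set b := sInf {k | secatLE (endpointsMap m G) k} with hbdef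
  have ha : catLE G a := Nat.sInf_mem hL
  have hb : secatLE (endpointsMap m G) b := Nat.sInf_mem hTC
  have hLa : (a : ℕ∞) ≤ LScat G := enat_coe_sInf_le hL
  have hTb : (b : ℕ∞) ≤ TCn m G := enat_coe_sInf_le hTC
  -- main construction
  obtain ⟨V, hVo, hVc, hVh⟩ := ha
  obtain ⟨U, hUo, hUc, hUs⟩ := hb
  haveI : NormalSpace (Fin (m + 1) → G) := hnorm (m + 1)
  set fr : (Fin (m + 1) → G) → (Fin m → G) := fun w k => w (Fin.castSucc k) with hfrdef
  have frc : Continuous fr := continuous_pi fun k => continuous_apply _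
  set lm : Fin m := ⟨m - 1, by omega⟩ with hlmdef
  set qt : (Fin (m + 1) → G) → G :=
    fun w => (w (Fin.castSucc lm))⁻¹ * w (Fin.last m) with hqtdef
  have qtc : Continuous qt := ((continuous_apply _).inv).mul (continuous_apply _)
  set Ab : Fin (b + 1) → Set (Fin (m + 1) → G) := fun i => fr ⁻¹' U i with hAbdef
  set Bs : Fin (a + 1) → Set (Fin (m + 1) → G) := fun j => qt ⁻¹' V j with hBsdef
  set P : Set (Fin (m + 1) → G) → Prop := fun S =>
    ∃ s : C(S, MultiPath (m + 1) G),
      ∀ x : S, endpointsMap (m + 1) G (s x) = ↑x with hPdef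
  have Pmono : ∀ {S T : Set (Fin (m + 1) → G)}, P T → S ⊆ T → P S :=
    fun hT hST => restrict_section _ hST hT
  have Pglue : ∀ {κ : Type} (t : κ → Set (Fin (m + 1) → G)), (∀ i, IsOpen (t i)) →
      Pairwise (Function.onFun Disjoint t) → (∀ i, P (t i)) → P (⋃ i, t i) :=
    fun t ho hd hs => glue_sections _ t ho hd hs
  have hP : ∀ i j, P (Ab i ∩ Bs j) := by
    intro i j
    obtain ⟨si, hsi⟩ := hUs i
    obtain ⟨y, hy⟩ := hVh j
    have K := hy.some
    have γ : Path (1 : G) y := PathConnectedSpace.somePath 1 y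
    exact pair_section γ si hsi K lm (Ab i ∩ Bs j)
      (fun w hw => hw.1) (fun w hw => hw.2)
  obtain ⟨W, hWo, hWc, hWP⟩ := combine_covers P Pmono Pglue Ab Bs
    (fun i => (hUo i).preimage frc) (fun j => (hVo j).preimage qtc)
    (by
      rw [Set.eq_univ_iff_forall]
      intro x
      have : fr x ∈ ⋃ i, U i := hUc ▸ Set.mem_univ _
      obtain ⟨i, hi⟩ := Set.mem_iUnion.1 this
      exact Set.mem_iUnion.2 ⟨i, hi⟩)
    (by
      rw [Set.eq_univ_iff_forall]
      intro x
      have : qt x ∈ ⋃ j, V j := hVc ▸ Set.mem_univ _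
      obtain ⟨j, hj⟩ := Set.mem_iUnion.1 this
      exact Set.mem_iUnion.2 ⟨j, hj⟩)
    hP
  have hmain : secatLE (endpointsMap (m + 1) G) (a + b) := by
    exact ⟨W, hWo, hWc, fun k => hWP k⟩
  calc TCn (m + 1) G ≤ ((a + b : ℕ) : ℕ∞) := sInf_le ⟨a + b, hmain, rfl⟩
    _ = (a : ℕ∞) + (b : ℕ∞) := by push_cast; ring
    _ ≤ LScat G + TCn m G := add_le_add hLa hTb
end
end

section
/- Let X and Y be path-connected spaces such that (X × Y)^n is a normal topological space. Then TC_n(X × Y) ≤ TC_n(X) + TC_n(Y). -/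
noncomputable section


section Aux
open Set

variable {Z E : Type*} [TopologicalSpace Z] [TopologicalSpace E]




/-- Glue strict sections over a pairwise-disjoint family of open sets. -/
lemma exists_section_iUnion {ι : Type*} (p : C(E, Z)) (O : ι → Set Z)
    (ho : ∀ i, IsOpen (O i))
    (hd : ∀ i j, i ≠ j → ∀ z, z ∈ O i → z ∈ O j → False)
    (hs : ∀ i, ∃ s : C(↥(O i), E), ∀ x, p (s x) = x) :
    ∃ s : C(↥(⋃ i, O i), E), ∀ x, p (s x) = x := by
  choose sec hsec using hs
  have hmem : ∀ z : ↥(⋃ i, O i), ∃ i, (z : Z) ∈ O i := fun z => mem_iUnion.1 z.2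
  classical
  set σ : ↥(⋃ i, O i) → E := fun z => sec (hmem z).choose ⟨z, (hmem z).choose_spec⟩ with hσ
  have hkey : ∀ (z : ↥(⋃ i, O i)) (i : ι) (hz : (z : Z) ∈ O i),
      σ z = sec i ⟨(z : Z), hz⟩ := by
    intro z i hz
    have hji : (hmem z).choose = i := by
      by_contra hne
      exact hd _ _ hne z (hmem z).choose_spec hz
    have : ∀ (j : ι) (hj : (z : Z) ∈ O j), j = i → sec j ⟨(z : Z), hj⟩ = sec i ⟨(z : Z), hz⟩ := by
      rintro j hj rfl; rfl
    exact this _ _ hji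
  have hcont : Continuous σ := by
    rw [continuous_iff_continuousAt]
    intro z₀
    set i₀ := (hmem z₀).choose with hi₀
    have hz₀ : (z₀ : Z) ∈ O i₀ := (hmem z₀).choose_spec
    have hNopen : IsOpen (Subtype.val ⁻¹' O i₀ : Set ↥(⋃ i, O i)) :=
      (ho i₀).preimage continuous_subtype_val
    refine ContinuousOn.continuousAt ?_ (hNopen.mem_nhds hz₀)
    rw [continuousOn_iff_continuous_restrict]
    have : domRestrict (Subtype.val ⁻¹' O i₀) σ =
        (sec i₀) ∘ (fun w : ↥(Subtype.val ⁻¹' O i₀) => (⟨w.1.1, mem_preimage.mp w.2⟩ : ↥(O i₀))) := by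
      funext w
      exact hkey _ _ w.2
    rw [this]
    exact (sec i₀).continuous.comp
      ((continuous_subtype_val.comp continuous_subtype_val).subtype_mk _)
  refine ⟨⟨σ, hcont⟩, fun z => ?_⟩
  simp only [ContinuousMap.coe_mk]
  rw [hkey z _ (hmem z).choose_spec]
  exact hsec _ _

/-- Bump functions for a finite open cover of a normal space. -/
lemma exists_bumps [NormalSpace Z] {m : ℕ} (U : Fin m → Set Z)
    (hUo : ∀ i, IsOpen (U i)) (hUc : (⋃ i, U i) = univ) :
    ∃ f : Fin m → C(Z, ℝ), (∀ i z, 0 ≤ f i z) ∧ (∀ i z, 0 < f i z → z ∈ U i) ∧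
      (∀ z, ∃ i, 0 < f i z) := by
  obtain ⟨v, hvc, hvo, hvcl⟩ := exists_subset_iUnion_closure_subset isClosed_univ hUo
    (fun x _ => Set.toFinite _) (by rw [hUc])
  have hsec : ∀ i : Fin m, ∃ f : C(Z, ℝ), EqOn f 0 (U i)ᶜ ∧ EqOn f 1 (closure (v i)) ∧
      ∀ x, f x ∈ Icc (0 : ℝ) 1 := fun i =>
    exists_continuous_zero_one_of_isClosed (hUo i).isClosed_compl isClosed_closure
      (disjoint_compl_left.mono_right (hvcl i))
  choose f hf0 hf1 hf01 using hsec
  refine ⟨f, fun i z => (hf01 i z).1, fun i z hz => ?_, fun z => ?_⟩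
  · by_contra hzU
    rw [hf0 i hzU] at hz
    exact lt_irrefl _ hz
  · obtain ⟨i, hi⟩ := mem_iUnion.1 (hvc (mem_univ z))
    exact ⟨i, by rw [hf1 i (subset_closure hi)]; norm_num⟩


set_option maxHeartbeats 2000000 in
lemma secatLE_add [NormalSpace Z] (p : C(E, Z)) {a b : ℕ}
    (U : Fin (a + 1) → Set Z) (V : Fin (b + 1) → Set Z)
    (hUo : ∀ i, IsOpen (U i)) (hVo : ∀ j, IsOpen (V j))
    (hUc : (⋃ i, U i) = univ) (hVc : (⋃ j, V j) = univ)
    (hsec : ∀ i j, ∃ s : C(↥(U i ∩ V j), E), ∀ x, p (s x) = (x : Z)) :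
    secatLE p (a + b) := by
  classical
  obtain ⟨f, hf0, hfU, hfpos⟩ := exists_bumps U hUo hUc
  obtain ⟨g, hg0, hgV, hgpos⟩ := exists_bumps V hVo hVc
  set P := Fin (a + 1) × Fin (b + 1)
  set O : P → Set Z := fun ij =>
    {z | 0 < f ij.1 z * g ij.2 z} ∩
      ⋂ kl : P, {z | kl ≠ ij → kl.1.1 + kl.2.1 ≤ ij.1.1 + ij.2.1 →
        f kl.1 z * g kl.2 z < f ij.1 z * g ij.2 z} with hO
  -- membership characterization
  have hmemO : ∀ (ij : P) (z : Z), z ∈ O ij ↔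
      (0 < f ij.1 z * g ij.2 z ∧ ∀ kl : P, kl ≠ ij → kl.1.1 + kl.2.1 ≤ ij.1.1 + ij.2.1 →
        f kl.1 z * g kl.2 z < f ij.1 z * g ij.2 z) := by
    intro ij z
    simp only [hO, mem_inter_iff, mem_setOf_eq, mem_iInter]
  -- positivity of both factors
  have hfac : ∀ (i : Fin (a+1)) (j : Fin (b+1)) (z : Z), 0 < f i z * g j z →
      0 < f i z ∧ 0 < g j z := by
    intro i j z h
    constructor
    · rcases lt_or_eq_of_le (hf0 i z) with h' | h'
      · exact h'
      · exfalso; rw [← h'] at h; simp at h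
    · rcases lt_or_eq_of_le (hg0 j z) with h' | h'
      · exact h'
      · exfalso; rw [← h'] at h; simp at h
  -- openness
  have hOopen : ∀ ij : P, IsOpen (O ij) := by
    intro ij
    apply IsOpen.inter
    · exact isOpen_lt continuous_const ((f ij.1).continuous.mul (g ij.2).continuous)
    · refine isOpen_iInter_of_finite fun kl => ?_
      by_cases h1 : kl ≠ ij
      · by_cases h2 : kl.1.1 + kl.2.1 ≤ ij.1.1 + ij.2.1
        · have : {z | kl ≠ ij → kl.1.1 + kl.2.1 ≤ ij.1.1 + ij.2.1 →
              f kl.1 z * g kl.2 z < f ij.1 z * g ij.2 z} =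
              {z | f kl.1 z * g kl.2 z < f ij.1 z * g ij.2 z} := by
            ext z; simp [h1, h2]
          rw [this]
          exact isOpen_lt ((f kl.1).continuous.mul (g kl.2).continuous)
            ((f ij.1).continuous.mul (g ij.2).continuous)
        · have : {z | kl ≠ ij → kl.1.1 + kl.2.1 ≤ ij.1.1 + ij.2.1 →
              f kl.1 z * g kl.2 z < f ij.1 z * g ij.2 z} = univ := by
            ext z; simp [h2]
          rw [this]; exact isOpen_univ
      · have : {z | kl ≠ ij → kl.1.1 + kl.2.1 ≤ ij.1.1 + ij.2.1 →
            f kl.1 z * g kl.2 z < f ij.1 z * g ij.2 z} = univ := by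
          ext z; simp [h1]
        rw [this]; exact isOpen_univ
  -- O ij is inside U i ∩ V j
  have hOsub : ∀ ij : P, O ij ⊆ U ij.1 ∩ V ij.2 := by
    intro ij z hz
    obtain ⟨h1, -⟩ := (hmemO ij z).1 hz
    obtain ⟨hf', hg'⟩ := hfac _ _ _ h1
    exact ⟨hfU _ _ hf', hgV _ _ hg'⟩
  -- disjointness for equal index sum
  have hdisj : ∀ ij kl : P, ij ≠ kl → ij.1.1 + ij.2.1 = kl.1.1 + kl.2.1 →
      ∀ z, z ∈ O ij → z ∈ O kl → False := by
    intro ij kl hne hsum z hzi hzk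
    obtain ⟨-, h2⟩ := (hmemO ij z).1 hzi
    obtain ⟨-, h4⟩ := (hmemO kl z).1 hzk
    exact lt_asymm (h2 kl (Ne.symm hne) hsum.ge) (h4 ij hne hsum.le)
  -- covering
  have hcov : ∀ z : Z, ∃ ij : P, z ∈ O ij := by
    intro z
    obtain ⟨i0, hi0⟩ := hfpos z
    obtain ⟨j0, hj0⟩ := hgpos z
    obtain ⟨mx, -, hmx⟩ := Finset.exists_max_image (Finset.univ : Finset P)
      (fun kl => f kl.1 z * g kl.2 z) ⟨(i0, j0), Finset.mem_univ _⟩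
    set M := f mx.1 z * g mx.2 z with hM
    have hMpos : 0 < M := lt_of_lt_of_le (mul_pos hi0 hj0) (hmx (i0, j0) (Finset.mem_univ _))
    set T : Finset P := Finset.univ.filter (fun kl => f kl.1 z * g kl.2 z = M) with hT
    have hmxT : mx ∈ T := by simp [hT, hM]
    obtain ⟨ij, hijT, hmin⟩ := Finset.exists_min_image T (fun kl => kl.1.1 + kl.2.1) ⟨mx, hmxT⟩
    have hijM : f ij.1 z * g ij.2 z = M := by
      simpa [hT] using hijT
    refine ⟨ij, (hmemO ij z).2 ⟨by rw [hijM]; exact hMpos, ?_⟩⟩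
    intro kl hkl hsum
    rw [hijM]
    rcases lt_or_eq_of_le (hmx kl (Finset.mem_univ _)) with h | h
    · exact h
    · -- kl is also a maximizer
      exfalso
      have hklT : kl ∈ T := by simp [hT, h]
      have hsum' : ij.1.1 + ij.2.1 ≤ kl.1.1 + kl.2.1 := hmin kl hklT
      have hsumeq : kl.1.1 + kl.2.1 = ij.1.1 + ij.2.1 := le_antisymm hsum hsum'
      -- cross terms
      have hfi : 0 < f ij.1 z ∧ 0 < g ij.2 z := hfac _ _ _ (by rw [hijM]; exact hMpos)
      have hfk : 0 < f kl.1 z ∧ 0 < g kl.2 z := hfac _ _ _ (by rw [h]; exact hMpos)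
      have hcross1 : f ij.1 z * g kl.2 z = M := by
        have hle : f ij.1 z * g kl.2 z ≤ M := hmx (ij.1, kl.2) (Finset.mem_univ _)
        have hle2 : f kl.1 z * g ij.2 z ≤ M := hmx (kl.1, ij.2) (Finset.mem_univ _)
        nlinarith [hfi.1, hfi.2, hfk.1, hfk.2, hijM, h]
      have hcross2 : f kl.1 z * g ij.2 z = M := by
        have hle : f ij.1 z * g kl.2 z ≤ M := hmx (ij.1, kl.2) (Finset.mem_univ _)
        have hle2 : f kl.1 z * g ij.2 z ≤ M := hmx (kl.1, ij.2) (Finset.mem_univ _)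
        nlinarith [hfi.1, hfi.2, hfk.1, hfk.2, hijM, h]
      have h1T : (ij.1, kl.2) ∈ T := by simp [hT, hcross1]
      have h2T : (kl.1, ij.2) ∈ T := by simp [hT, hcross2]
      have e1 : ij.1.1 + ij.2.1 ≤ ij.1.1 + kl.2.1 := hmin _ h1T
      have e2 : ij.1.1 + ij.2.1 ≤ kl.1.1 + ij.2.1 := hmin _ h2T
      have : ij.1.1 = kl.1.1 ∧ ij.2.1 = kl.2.1 := by omega
      exact hkl (Prod.ext (Fin.ext this.1.symm) (Fin.ext this.2.symm))
  -- assemble the cover W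
  set W : Fin (a + b + 1) → Set Z := fun m =>
    ⋃ s : {ij : P // ij.1.1 + ij.2.1 = m.1}, O s.1 with hW
  refine ⟨W, fun m => isOpen_iUnion fun s => hOopen s.1, ?_, ?_⟩
  · apply eq_univ_of_forall
    intro z
    obtain ⟨ij, hij⟩ := hcov z
    have hlt : ij.1.1 + ij.2.1 < a + b + 1 := by omega
    exact mem_iUnion.2 ⟨⟨ij.1.1 + ij.2.1, hlt⟩, mem_iUnion.2 ⟨⟨ij, rfl⟩, hij⟩⟩
  · intro m
    refine exists_section_iUnion p (fun s : {ij : P // ij.1.1 + ij.2.1 = m.1} => O s.1)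
      (fun s => hOopen s.1) ?_ ?_
    · rintro ⟨ij, hij⟩ ⟨kl, hkl⟩ hne z hzi hzk
      refine hdisj ij kl (fun h => hne ?_) (by omega) z hzi hzk
      exact Subtype.ext h
    · rintro ⟨ij, hij⟩
      obtain ⟨s, hs⟩ := hsec ij.1 ij.2
      refine ⟨s.comp ⟨fun w => ⟨w.1, hOsub ij w.2⟩,
        (continuous_subtype_val.subtype_mk _)⟩, fun x => hs _⟩


def multiPathPair (n : ℕ) (X Y : Type*) [TopologicalSpace X] [TopologicalSpace Y] :
    C(MultiPath n X × MultiPath n Y, MultiPath n (X × Y)) where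
  toFun fg := ⟨fun i => (fg.1.1 i).prodMk (fg.2.1 i), fun i j =>
    Prod.ext_iff.2 ⟨fg.1.2 i j, fg.2.2 i j⟩⟩
  continuous_toFun := by
    apply Continuous.subtype_mk
    apply continuous_pi
    intro i
    apply ContinuousMap.continuous_of_continuous_uncurry
    apply Continuous.prodMk
    · exact continuous_eval.comp
        (((continuous_apply i).comp (continuous_subtype_val.comp
          (continuous_fst.comp continuous_fst))).prodMk continuous_snd)
    · exact continuous_eval.comp
        (((continuous_apply i).comp (continuous_subtype_val.comp
          (continuous_snd.comp continuous_fst))).prodMk continuous_snd)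

lemma multiPathPair_endpoint {n : ℕ} {X Y : Type*} [TopologicalSpace X] [TopologicalSpace Y]
    (fg : MultiPath n X × MultiPath n Y) :
    endpointsMap n (X × Y) (multiPathPair n X Y fg) =
      fun i => (endpointsMap n X fg.1 i, endpointsMap n Y fg.2 i) := rfl


lemma secat_le_of_secatLE {p : C(E, Z)} {k : ℕ} (h : secatLE p k) : secat p ≤ (k : ℕ∞) :=
  sInf_le ⟨k, h, rfl⟩

lemma secat_eq_top_of_empty {p : C(E, Z)} (h : ¬ {k | secatLE p k}.Nonempty) :
    secat p = ⊤ := by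
  rw [Set.not_nonempty_iff_eq_empty] at h
  simp [secat, h]

lemma exists_secatLE_le {p : C(E, Z)} (h : {k | secatLE p k}.Nonempty) :
    ∃ a : ℕ, secatLE p a ∧ (a : ℕ∞) ≤ secat p := by
  refine ⟨sInf {k | secatLE p k}, Nat.sInf_mem h, le_sInf ?_⟩
  rintro x ⟨k, hk, rfl⟩
  exact Nat.cast_le.2 (Nat.sInf_le hk)

end Aux

/-- For path-connected spaces `X`, `Y` with `(X × Y)^n` normal (Hausdorff),
`TC_n(X × Y) ≤ TC_n(X) + TC_n(Y)`. -/
theorem TC_prod_le (n : ℕ) (hn : 2 ≤ n) (X Y : Type*) [TopologicalSpace X] [TopologicalSpace Y]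
    [PathConnectedSpace X] [PathConnectedSpace Y]
    [NormalSpace (Fin n → X × Y)] [T2Space (Fin n → X × Y)] :
    TCn n (X × Y) ≤ TCn n X + TCn n Y := by
  classical
  by_cases hX : {k | secatLE (endpointsMap n X) k}.Nonempty
  swap
  · rw [show TCn n X = ⊤ from secat_eq_top_of_empty hX, top_add]
    exact le_top
  by_cases hY : {k | secatLE (endpointsMap n Y) k}.Nonempty
  swap
  · rw [show TCn n Y = ⊤ from secat_eq_top_of_empty hY, add_top]
    exact le_top
  obtain ⟨a, ⟨U, hUo, hUc, hUs⟩, ha⟩ := exists_secatLE_le hX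
  obtain ⟨b, ⟨V, hVo, hVc, hVs⟩, hb⟩ := exists_secatLE_le hY
  -- pull the covers back to (X × Y)^n
  set Z := Fin n → X × Y
  have hpX : Continuous (fun z : Z => fun i => (z i).1) :=
    continuous_pi fun i => continuous_fst.comp (continuous_apply i)
  have hpY : Continuous (fun z : Z => fun i => (z i).2) :=
    continuous_pi fun i => continuous_snd.comp (continuous_apply i)
  set U' : Fin (a + 1) → Set Z := fun i => (fun z : Z => fun k => (z k).1) ⁻¹' U i with hU'
  set V' : Fin (b + 1) → Set Z := fun j => (fun z : Z => fun k => (z k).2) ⁻¹' V j with hV'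
  have key : secatLE (endpointsMap n (X × Y)) (a + b) := by
    apply secatLE_add (endpointsMap n (X × Y)) U' V'
      (fun i => (hUo i).preimage hpX) (fun j => (hVo j).preimage hpY)
    · apply Set.eq_univ_of_forall
      intro z
      have : (fun k => (z k).1) ∈ ⋃ i, U i := by rw [hUc]; trivial
      obtain ⟨i, hi⟩ := Set.mem_iUnion.1 this
      exact Set.mem_iUnion.2 ⟨i, hi⟩
    · apply Set.eq_univ_of_forall
      intro z
      have : (fun k => (z k).2) ∈ ⋃ j, V j := by rw [hVc]; trivial
      obtain ⟨j, hj⟩ := Set.mem_iUnion.1 this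
      exact Set.mem_iUnion.2 ⟨j, hj⟩
    · intro i j
      obtain ⟨sX, hsX⟩ := hUs i
      obtain ⟨sY, hsY⟩ := hVs j
      refine ⟨(multiPathPair n X Y).comp ⟨fun z => (sX ⟨fun k => ((z : Z) k).1, z.2.1⟩,
        sY ⟨fun k => ((z : Z) k).2, z.2.2⟩), ?_⟩, ?_⟩
      · exact (sX.continuous.comp ((hpX.comp continuous_subtype_val).subtype_mk _)).prodMk
          (sY.continuous.comp ((hpY.comp continuous_subtype_val).subtype_mk _))
      · intro z
        funext k
        have h1 := congrFun (hsX ⟨fun k => ((z : Z) k).1, z.2.1⟩) k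
        have h2 := congrFun (hsY ⟨fun k => ((z : Z) k).2, z.2.2⟩) k
        exact Prod.ext_iff.2 ⟨h1, h2⟩
  calc TCn n (X × Y) ≤ ((a + b : ℕ) : ℕ∞) := secat_le_of_secatLE key
    _ = (a : ℕ∞) + (b : ℕ∞) := by push_cast; rfl
    _ ≤ TCn n X + TCn n Y := add_le_add ha hb
end
end

section
/- The symmetrized topological complexity TC^Σ_n is a homotopy invariant: if X and Y are homotopy equivalent path-connected spaces, then TC^Σ_n(X) = TC^Σ_n(Y) for all n ≥ 2. -/
noncomputable section


/-- `symTCLE n X k` : `X^n` is covered by `k+1` open, `Σ_n`-invariant subsets, each admitting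
a continuous `Σ_n`-equivariant section of the evaluation fibration `e_n`. -/
def symTCLE (n : ℕ) (X : Type*) [TopologicalSpace X] (k : ℕ) : Prop :=
  ∃ A : Fin (k + 1) → Set (Fin n → X),
    (∀ i, IsOpen (A i)) ∧ (⋃ i, A i) = Set.univ ∧
    ∀ i, ∃ hinv : ∀ (σ : Equiv.Perm (Fin n)) (x : Fin n → X), x ∈ A i → x ∘ σ ∈ A i,
      ∃ s : C(A i, MultiPath n X),
        (∀ x : A i, endpointsMap n X (s x) = (x : Fin n → X)) ∧
        ∀ (σ : Equiv.Perm (Fin n)) (x : Fin n → X) (hx : x ∈ A i),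
          (s ⟨x ∘ σ, hinv σ x hx⟩).1 = fun j => (s ⟨x, hx⟩).1 (σ j)

/-- The symmetrized `n`-th topological complexity `TC^Σ_n`. -/
def symTC (n : ℕ) (X : Type*) [TopologicalSpace X] : ℕ∞ :=
  sInf ((fun k : ℕ => (k : ℕ∞)) '' {k | symTCLE n X k})

/-- Concatenation of `ψ ∘ γ` with the homotopy track `t ↦ H (t, x)`. -/
def concatAux {X Y : Type*} [TopologicalSpace X] [TopologicalSpace Y]
    (ψ : C(Y, X)) (H : C(unitInterval × X, X)) (γ : C(unitInterval, Y)) (x : X)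
    (t : unitInterval) : X :=
  if (t : ℝ) ≤ 1 / 2 then ψ (γ (Set.projIcc 0 1 zero_le_one (2 * t)))
  else H (Set.projIcc 0 1 zero_le_one (2 * t - 1), x)

lemma concatAux_zero {X Y : Type*} [TopologicalSpace X] [TopologicalSpace Y]
    (ψ : C(Y, X)) (H : C(unitInterval × X, X)) (γ : C(unitInterval, Y)) (x : X) :
    concatAux ψ H γ x 0 = ψ (γ 0) := by
  have h2 : (2 : ℝ) * ((0 : unitInterval) : ℝ) = 0 := by norm_num
  simp only [concatAux, h2]
  rw [if_pos (by norm_num)]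
  congr 1
  exact congrArg γ (by rw [Set.projIcc_left]; rfl)

lemma concatAux_one {X Y : Type*} [TopologicalSpace X] [TopologicalSpace Y]
    (ψ : C(Y, X)) (H : C(unitInterval × X, X)) (γ : C(unitInterval, Y)) (x : X) :
    concatAux ψ H γ x 1 = H (1, x) := by
  have h2 : (2 : ℝ) * ((1 : unitInterval) : ℝ) - 1 = 1 := by norm_num
  simp only [concatAux, h2]
  rw [if_neg (by norm_num)]
  congr 1
  rw [Set.projIcc_right]; rfl

lemma concatAux_continuous {Z X Y : Type*} [TopologicalSpace Z] [TopologicalSpace X]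
    [TopologicalSpace Y] (ψ : C(Y, X)) (H : C(unitInterval × X, X))
    (γ : Z → C(unitInterval, Y)) (x : Z → X) (hγ : Continuous γ) (hx : Continuous x)
    (hmid : ∀ z, ψ (γ z 1) = H (0, x z)) :
    Continuous fun p : Z × unitInterval => concatAux ψ H (γ p.1) (x p.1) p.2 := by
  have hc1 : Continuous fun p : Z × unitInterval => Set.projIcc (0:ℝ) 1 zero_le_one (2 * (p.2 : ℝ)) :=
    continuous_projIcc.comp (continuous_const.mul (continuous_subtype_val.comp continuous_snd))
  have hc2 : Continuous fun p : Z × unitInterval => Set.projIcc (0:ℝ) 1 zero_le_one (2 * (p.2 : ℝ) - 1) :=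
    continuous_projIcc.comp ((continuous_const.mul
      (continuous_subtype_val.comp continuous_snd)).sub continuous_const)
  have hg1 : Continuous fun p : Z × unitInterval => γ p.1 := hγ.comp continuous_fst
  have hx1 : Continuous fun p : Z × unitInterval => x p.1 := hx.comp continuous_fst
  apply Continuous.if_le
  · exact ψ.continuous.comp (ContinuousEval.continuous_eval.comp (hg1.prodMk hc1))
  · exact H.continuous.comp (hc2.prodMk hx1)
  · exact continuous_subtype_val.comp continuous_snd
  · exact continuous_const
  · intro p hp
    have h1 : (2 : ℝ) * ((p.2 : unitInterval) : ℝ) = 1 := by rw [hp]; norm_num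
    have e1 : Set.projIcc (0:ℝ) 1 zero_le_one (2 * (p.2 : ℝ)) = 1 := by
      rw [h1, Set.projIcc_right]; rfl
    have e0 : Set.projIcc (0:ℝ) 1 zero_le_one (2 * (p.2 : ℝ) - 1) = 0 := by
      rw [h1]; norm_num
    rw [e1, e0, hmid]
lemma symTCLE_of_homotopyEquiv {X Y : Type*} [TopologicalSpace X] [TopologicalSpace Y]
    (n k : ℕ) (e : ContinuousMap.HomotopyEquiv X Y) (hk : symTCLE n Y k) :
    symTCLE n X k := by
  classical
  obtain ⟨A, hAopen, hAcov, hAs⟩ := hk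
  set φ : C(X, Y) := e.toFun with hφ
  set ψ : C(Y, X) := e.invFun with hψ
  obtain ⟨H⟩ := e.left_inv
  have hΦ : Continuous fun x : Fin n → X => fun j => φ (x j) :=
    continuous_pi fun j => φ.continuous.comp (continuous_apply j)
  refine ⟨fun i => (fun x : Fin n → X => fun j => φ (x j)) ⁻¹' (A i),
    fun i => (hAopen i).preimage hΦ, ?_, ?_⟩
  · apply Set.eq_univ_of_forall
    intro x
    have hmem : (fun j => φ (x j)) ∈ ⋃ i, A i := hAcov ▸ Set.mem_univ _
    obtain ⟨i, hi⟩ := Set.mem_iUnion.mp hmem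
    exact Set.mem_iUnion.mpr ⟨i, hi⟩
  · intro i
    obtain ⟨hinv, s, hsec, hequiv⟩ := hAs i
    set B : Set (Fin n → X) := (fun x : Fin n → X => fun j => φ (x j)) ⁻¹' (A i) with hBdef
    have hinv' : ∀ (σ : Equiv.Perm (Fin n)) (x : Fin n → X), x ∈ B → x ∘ σ ∈ B :=
      fun σ x hx => hinv σ (fun j => φ (x j)) hx
    let eA : C(B, A i) := ⟨fun b => ⟨fun j => φ (b.1 j), b.2⟩,
      (hΦ.comp continuous_subtype_val).subtype_mk _⟩
    have hγ : ∀ j : Fin n, Continuous fun b : B => (s (eA b)).1 j := fun j =>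
      (continuous_apply j).comp (continuous_subtype_val.comp (s.continuous.comp eA.continuous))
    have hxc : ∀ j : Fin n, Continuous fun b : B => b.1 j := fun j =>
      (continuous_apply j).comp continuous_subtype_val
    have hmid : ∀ (j : Fin n) (b : B),
        ψ ((s (eA b)).1 j 1) = H.toContinuousMap (0, b.1 j) := by
      intro j b
      have h1 : (s (eA b)).1 j 1 = φ (b.1 j) := congrFun (hsec (eA b)) j
      rw [h1]
      exact (H.apply_zero _).symm
    let K : Fin n → C(B × unitInterval, X) := fun j =>
      ⟨fun p => concatAux ψ H.toContinuousMap ((s (eA p.1)).1 j) (p.1.1 j) p.2,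
        concatAux_continuous ψ H.toContinuousMap _ _ (hγ j) (hxc j) (hmid j)⟩
    have hcommon : ∀ b : B, ∀ j j' : Fin n, (K j).curry b 0 = (K j').curry b 0 := by
      intro b j j'
      show concatAux ψ H.toContinuousMap ((s (eA b)).1 j) (b.1 j) 0 =
        concatAux ψ H.toContinuousMap ((s (eA b)).1 j') (b.1 j') 0
      rw [concatAux_zero, concatAux_zero, (s (eA b)).2 j j']
    let s' : C(B, MultiPath n X) := ⟨fun b => ⟨fun j => (K j).curry b, hcommon b⟩,
      (continuous_pi fun j => ((K j).curry).continuous).subtype_mk _⟩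
    refine ⟨hinv', s', ?_, ?_⟩
    · intro b
      funext j
      show concatAux ψ H.toContinuousMap ((s (eA b)).1 j) (b.1 j) 1 = b.1 j
      rw [concatAux_one]
      exact H.apply_one _
    · intro σ x hx
      funext j
      ext t
      have key : (s (eA ⟨x ∘ σ, hinv' σ x hx⟩)).1 j = (s (eA ⟨x, hx⟩)).1 (σ j) :=
        congrFun (hequiv σ (fun j => φ (x j)) hx) j
      show concatAux ψ H.toContinuousMap ((s (eA ⟨x ∘ σ, hinv' σ x hx⟩)).1 j) ((x ∘ σ) j) t =
        concatAux ψ H.toContinuousMap ((s (eA ⟨x, hx⟩)).1 (σ j)) (x (σ j)) t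
      rw [key]
      rfl

/-- `TC^Σ_n` is a homotopy invariant: homotopy equivalent path-connected
spaces have the same symmetrized `n`-th topological complexity (`n ≥ 2`). -/
theorem symTC_homotopy_invariant (n : ℕ) (hn : 2 ≤ n) (X Y : Type*) [TopologicalSpace X]
    [TopologicalSpace Y] [PathConnectedSpace X] [PathConnectedSpace Y]
    (h : Nonempty (ContinuousMap.HomotopyEquiv X Y)) :
    symTC n X = symTC n Y := by
  obtain ⟨e⟩ := h
  apply le_antisymm
  · exact sInf_le_sInf (Set.image_mono fun k hk => symTCLE_of_homotopyEquiv n k e hk)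
  · exact sInf_le_sInf (Set.image_mono fun k hk => symTCLE_of_homotopyEquiv n k e.symm hk)
end
end
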